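/- arXiv:1903.00127 — 2 statements merged into one kernel-verified Lean document; each statement's English description precedes it below -/
import Mathlib

section
/- For every θ ∈ (0,1) there exist constants C > 0 and δ₀ ∈ (0,1), depending only on θ, such that for every δ ∈ (0,δ₀) and every finitely supported function l : ℤ → ℤ one has ∏_{n∈ℤ} (1 + l_n²·w(n)⁴) ≤ exp( C·δ^{−5/θ} + δ·∑_{n∈ℤ} |l_n|·w(n)^{θ/2} ). -/
open scoped BigOperators

/-- `w(n) = max(1, |n|)` as a real number. -/
noncomputable def wR (n : ℤ) : ℝ := max 1 |(n : ℝ)|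

lemma wR_ge_one (n : ℤ) : 1 ≤ wR n := le_max_left _ _

lemma wR_pos (n : ℤ) : 0 < wR n := lt_of_lt_of_le one_pos (wR_ge_one n)

lemma log_le_self {t : ℝ} (ht : 0 < t) : Real.log t ≤ t := by
  have := Real.log_le_sub_one_of_pos ht; linarith

set_option maxHeartbeats 1000000 in
theorem stmt5 (θ : ℝ) (hθ : θ ∈ Set.Ioo (0:ℝ) 1) :
    ∃ C > (0:ℝ), ∃ δ₀ ∈ Set.Ioo (0:ℝ) 1, ∀ δ ∈ Set.Ioo (0:ℝ) δ₀, ∀ l : ℤ →₀ ℤ,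
      ∏ n ∈ l.support, (1 + (l n : ℝ) ^ 2 * wR n ^ 4)
        ≤ Real.exp (C * δ ^ (-(5 / θ))
            + δ * ∑ n ∈ l.support, |(l n : ℝ)| * wR n ^ (θ / 2)) := by
  obtain ⟨hθ0, hθ1⟩ := hθ
  have hθ1' : θ ≤ 1 := le_of_lt hθ1
  refine ⟨1565/θ^2 * (19/θ) ^ (4/θ), by positivity, 1/2, by norm_num, ?_⟩
  intro δ hδ l
  obtain ⟨hδ0, hδhalf⟩ := hδ
  have hδ1 : δ < 1 := by linarith
  set R : ℝ := (19/(θ*δ)) ^ (4/θ) with hRdef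
  have hbase1 : (1:ℝ) ≤ 19/(θ*δ) := by
    rw [le_div_iff₀ (by positivity)]
    nlinarith
  have hR1 : (1:ℝ) ≤ R := Real.one_le_rpow hbase1 (by positivity)
  have hR0 : (0:ℝ) < R := by linarith
  set M : ℕ := ⌈R⌉₊ with hMdef
  have hMR : R ≤ (M:ℝ) := Nat.le_ceil R
  have hM1 : (1:ℝ) ≤ (M:ℝ) := by exact_mod_cast Nat.one_le_ceil_iff.mpr hR0
  have hM2R : (M:ℝ) ≤ 2*R := by
    have := Nat.ceil_lt_add_one (le_of_lt hR0)
    have : (M:ℝ) < R + 1 := this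
    linarith
  set c : ℝ := Real.log 2 + 2*Real.log (2/δ) + 4*Real.log (2*R) with hcdef
  have hlog2 : Real.log 2 ≤ 1 := by
    have := Real.log_le_sub_one_of_pos (by norm_num : (0:ℝ) < 2); linarith
  have hlog2pos : (0:ℝ) ≤ Real.log 2 := Real.log_nonneg (by norm_num)
  have hc0 : 0 ≤ c := by
    have h1 : (0:ℝ) ≤ Real.log (2/δ) := Real.log_nonneg (by
      rw [le_div_iff₀ hδ0]; linarith)
    have h2 : (0:ℝ) ≤ Real.log (2*R) := Real.log_nonneg (by linarith)
    positivity
  -- key per-term bound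
  have key : ∀ n ∈ l.support, (1 + (l n : ℝ) ^ 2 * wR n ^ 4)
      ≤ Real.exp (δ * (|(l n : ℝ)| * wR n ^ (θ/2))
          + (if |n| ≤ (M:ℤ) then c else 0)) := by
    intro n hn
    have hln : l n ≠ 0 := Finsupp.mem_support_iff.mp hn
    set x : ℝ := |(l n : ℝ)| with hxdef
    have hx1 : (1:ℝ) ≤ x := by
      have := Int.one_le_abs hln
      rw [hxdef, ← Int.cast_abs]
      exact_mod_cast this
    have hx0 : (0:ℝ) < x := by linarith
    set w : ℝ := wR n with hwdef
    have hw1 : (1:ℝ) ≤ w := wR_ge_one n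
    have hw0 : (0:ℝ) < w := wR_pos n
    have hwt2 : (1:ℝ) ≤ w ^ (θ/2) := Real.one_le_rpow hw1 (by positivity)
    have hsq : (l n : ℝ)^2 = x^2 := (sq_abs _).symm
    have hbig : (1:ℝ) ≤ x^2 * w^4 := by
      have h1 : (1:ℝ) ≤ x^2 := one_le_pow₀ hx1
      have h2 : (1:ℝ) ≤ w^4 := one_le_pow₀ hw1
      nlinarith
    have step1 : 1 + (l n : ℝ)^2 * wR n ^ 4 ≤ 2 * (x^2 * w^4) := by
      rw [hsq]; linarith
    have hprodpos : (0:ℝ) < 2 * (x^2 * w^4) := by positivity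
    have hlogeq : Real.log (2 * (x^2 * w^4)) =
        Real.log 2 + 2 * Real.log x + 4 * Real.log w := by
      rw [Real.log_mul (by norm_num) (by positivity),
          Real.log_mul (by positivity) (by positivity),
          Real.log_pow, Real.log_pow]
      push_cast; ring
    have hlogw0 : (0:ℝ) ≤ Real.log w := Real.log_nonneg hw1
    -- it suffices to bound the log
    have main : Real.log 2 + 2 * Real.log x + 4 * Real.log w
        ≤ δ * (x * w ^ (θ/2)) + (if |n| ≤ (M:ℤ) then c else 0) := by
      by_cases hcase : |n| ≤ (M:ℤ)
      · -- small n
        rw [if_pos hcase]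
        have hwM : w ≤ (M:ℝ) := by
          rw [hwdef]
          refine max_le hM1 ?_
          rw [← Int.cast_abs]
          exact_mod_cast hcase
        have hw2R : w ≤ 2*R := le_trans hwM hM2R
        have hlogwle : Real.log w ≤ Real.log (2*R) :=
          Real.log_le_log hw0 hw2R
        have hlogx : 2 * Real.log x ≤ δ * x + 2 * Real.log (2/δ) := by
          have hxe : x = (δ*x/2) * (2/δ) := by field_simp
          have h1 : Real.log x = Real.log (δ*x/2) + Real.log (2/δ) := by
            rw [hxe, Real.log_mul (by positivity) (by positivity)]
            congr 1 <;> rw [← hxe]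
          have h2 := Real.log_le_sub_one_of_pos (show (0:ℝ) < δ*x/2 by positivity)
          rw [h1]; linarith
        have hdx : δ * x ≤ δ * (x * w ^ (θ/2)) := by
          nlinarith [mul_nonneg hδ0.le hx0.le]
        rw [hcdef]; linarith
      · -- large n
        rw [if_neg hcase]
        push_neg at hcase
        have hwR : R ≤ w := by
          have h1 : (M:ℝ) ≤ |(n:ℝ)| := by
            rw [← Int.cast_abs]
            exact_mod_cast le_of_lt hcase
          have h2 : |(n:ℝ)| ≤ w := le_max_right _ _
          linarith
        have hwq : 19/(θ*δ) ≤ w ^ (θ/4) := by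
          have h1 : R ^ (θ/4) ≤ w ^ (θ/4) :=
            Real.rpow_le_rpow (le_of_lt hR0) hwR (by positivity)
          have h2 : R ^ (θ/4) = 19/(θ*δ) := by
            rw [hRdef, ← Real.rpow_mul (by positivity)]
            rw [show (4/θ) * (θ/4) = 1 by field_simp]
            exact Real.rpow_one _
          rw [← h2]; exact h1
        have hwq1 : (1:ℝ) ≤ w ^ (θ/4) := Real.one_le_rpow hw1 (by positivity)
        have hu0 : (0:ℝ) ≤ w ^ (θ/4) := by positivity
        have f1 : θ * Real.log w ≤ 4 * w ^ (θ/4) := by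
          have h1 : Real.log (w ^ (θ/4)) = (θ/4) * Real.log w :=
            Real.log_rpow hw0 _
          have h2 : Real.log (w ^ (θ/4)) ≤ w ^ (θ/4) :=
            log_le_self (by positivity)
          rw [h1] at h2; linarith
        have f2 : (19:ℝ) ≤ θ * δ * w ^ (θ/4) := by
          rw [div_le_iff₀ (by positivity)] at hwq
          linarith
        have f4 : w ^ (θ/4) * w ^ (θ/4) = w ^ (θ/2) := by
          rw [← Real.rpow_add hw0]; congr 1; ring
        have hK : Real.log 2 + 2 + 4 * Real.log w ≤ δ * w ^ (θ/2) := by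
          have hmul : θ * (Real.log 2 + 2 + 4 * Real.log w)
              ≤ θ * (δ * w ^ (θ/2)) := by
            rw [← f4]
            have g1 : θ * Real.log 2 ≤ θ * 1 :=
              mul_le_mul_of_nonneg_left hlog2 hθ0.le
            have g2 : 19 * w ^ (θ/4) ≤ (θ * δ * w ^ (θ/4)) * w ^ (θ/4) :=
              mul_le_mul_of_nonneg_right f2 hu0
            nlinarith
          exact le_of_mul_le_mul_left hmul hθ0
        have hlogx : 2 * Real.log x ≤ 2*x - 2 := by
          have := Real.log_le_sub_one_of_pos hx0; linarith
        have : Real.log 2 + 2 * Real.log x + 4 * Real.log w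
            ≤ x * (Real.log 2 + 2 + 4 * Real.log w) := by nlinarith
        have h8 : x * (Real.log 2 + 2 + 4 * Real.log w) ≤ x * (δ * w ^ (θ/2)) :=
          mul_le_mul_of_nonneg_left hK (le_of_lt hx0)
        have h9 : x * (δ * w ^ (θ/2)) = δ * (x * w ^ (θ/2)) := by ring
        linarith
    calc 1 + (l n : ℝ)^2 * wR n ^ 4 ≤ 2 * (x^2 * w^4) := step1
      _ = Real.exp (Real.log (2 * (x^2 * w^4))) := (Real.exp_log hprodpos).symm
      _ ≤ _ := by
          apply Real.exp_le_exp.mpr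
          rw [hlogeq]; exact main
  -- combine
  have hprod : ∏ n ∈ l.support, (1 + (l n : ℝ) ^ 2 * wR n ^ 4)
      ≤ ∏ n ∈ l.support, Real.exp (δ * (|(l n : ℝ)| * wR n ^ (θ/2))
          + (if |n| ≤ (M:ℤ) then c else 0)) := by
    apply Finset.prod_le_prod
    · intro n hn; positivity
    · exact key
  rw [← Real.exp_sum] at hprod
  refine le_trans hprod (Real.exp_le_exp.mpr ?_)
  rw [Finset.sum_add_distrib]
  have hs1 : ∑ n ∈ l.support, δ * (|(l n : ℝ)| * wR n ^ (θ/2))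
      = δ * ∑ n ∈ l.support, |(l n : ℝ)| * wR n ^ (θ/2) := by
    rw [Finset.mul_sum]
  rw [hs1]
  have hs2 : ∑ n ∈ l.support, (if |n| ≤ (M:ℤ) then c else 0)
      ≤ 1565/θ^2 * (19/θ) ^ (4/θ) * δ ^ (-(5/θ)) := by
    have hfil : ∑ n ∈ l.support, (if |n| ≤ (M:ℤ) then c else 0)
        = ∑ n ∈ l.support.filter (fun n => |n| ≤ (M:ℤ)), c :=
      (Finset.sum_filter _ _).symm
    rw [hfil, Finset.sum_const, nsmul_eq_mul]
    have hcard : (l.support.filter (fun n => |n| ≤ (M:ℤ))).card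
        ≤ (Finset.Icc (-(M:ℤ)) (M:ℤ)).card := by
      apply Finset.card_le_card
      intro n hn
      rw [Finset.mem_filter] at hn
      rw [Finset.mem_Icc]
      exact abs_le.mp hn.2
    have hIcc : ((Finset.Icc (-(M:ℤ)) (M:ℤ)).card : ℝ) = 2*(M:ℝ) + 1 := by
      have hz : ((M:ℤ) + 1 - -(M:ℤ)).toNat = 2*M+1 := by omega
      rw [Int.card_Icc, hz]
      push_cast; ring
    have hcard' : ((l.support.filter (fun n => |n| ≤ (M:ℤ))).card : ℝ) ≤ 5*R := by
      calc ((l.support.filter (fun n => |n| ≤ (M:ℤ))).card : ℝ)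
          ≤ ((Finset.Icc (-(M:ℤ)) (M:ℤ)).card : ℝ) := by exact_mod_cast hcard
        _ = 2*(M:ℝ) + 1 := hIcc
        _ ≤ 5*R := by linarith
    have hcbound : c ≤ 313/(θ^2*δ) := by
      have h1 : Real.log (2/δ) ≤ 2/δ := log_le_self (by positivity)
      have h2 : Real.log (2*R) ≤ 1 + 76/(θ^2*δ) := by
        have h3 : Real.log (2*R) = Real.log 2 + Real.log R :=
          Real.log_mul (by norm_num) (by positivity)
        have h4 : Real.log R = (4/θ) * Real.log (19/(θ*δ)) := by
          rw [hRdef, Real.log_rpow (by positivity)]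
        have h5 : Real.log (19/(θ*δ)) ≤ 19/(θ*δ) := log_le_self (by positivity)
        have h6 : (4/θ) * Real.log (19/(θ*δ)) ≤ (4/θ) * (19/(θ*δ)) :=
          mul_le_mul_of_nonneg_left h5 (by positivity)
        have h7 : (4/θ) * (19/(θ*δ)) = 76/(θ^2*δ) := by
          field_simp; ring
        rw [h3, h4]; linarith
      have hθδpos : (0:ℝ) < θ^2*δ := by positivity
      have hθδle : θ^2*δ ≤ 1 := by nlinarith
      rw [hcdef, le_div_iff₀ hθδpos]
      have hA : Real.log 2 * (θ^2*δ) ≤ 1 := by nlinarith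
      have hB : 2*Real.log (2/δ) * (θ^2*δ) ≤ 4 := by
        have hld : Real.log (2/δ) * δ ≤ 2 := by
          have := mul_le_mul_of_nonneg_right h1 (le_of_lt hδ0)
          rwa [div_mul_cancel₀ _ (ne_of_gt hδ0)] at this
        have hlogpos : 0 ≤ Real.log (2/δ) := Real.log_nonneg (by
          rw [le_div_iff₀ hδ0]; linarith)
        have hθsq : θ^2 ≤ 1 := by nlinarith
        have hθsq0 : 0 ≤ θ^2 := sq_nonneg θ
        nlinarith [mul_nonneg hlogpos (le_of_lt hδ0)]
      have hC : 4*Real.log (2*R) * (θ^2*δ) ≤ 308 := by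
        have hlr : 0 ≤ Real.log (2*R) := Real.log_nonneg (by linarith)
        have h8 := mul_le_mul_of_nonneg_right h2 (le_of_lt hθδpos)
        have h76 : (1 + 76/(θ^2*δ)) * (θ^2*δ) = θ^2*δ + 76 := by
          field_simp
        nlinarith
      nlinarith
    have hRδ : R * δ⁻¹ ≤ (19/θ) ^ (4/θ) * δ ^ (-(5/θ)) := by
      have hsplit : R * δ⁻¹ = (19/θ) ^ (4/θ) * δ ^ (-(4/θ + 1)) := by
        rw [hRdef]
        have h1 : 19/(θ*δ) = (19/θ) * δ⁻¹ := by field_simp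
        rw [h1, Real.mul_rpow (by positivity) (by positivity),
            Real.inv_rpow (le_of_lt hδ0), ← Real.rpow_neg (le_of_lt hδ0),
            mul_assoc]
        congr 1
        rw [← Real.rpow_neg_one δ, ← Real.rpow_add hδ0]
        congr 1; ring
      rw [hsplit]
      refine mul_le_mul_of_nonneg_left ?_ (by positivity)
      refine Real.rpow_le_rpow_of_exponent_ge hδ0 (le_of_lt hδ1) ?_
      have h1θ : (1:ℝ) ≤ 1/θ := by rw [le_div_iff₀ hθ0]; linarith
      have h2θ : 4/θ + 1/θ = 5/θ := by ring
      linarith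
    calc ((l.support.filter (fun n => |n| ≤ (M:ℤ))).card : ℝ) * c
        ≤ (5*R) * (313/(θ^2*δ)) := mul_le_mul hcard' hcbound hc0 (by positivity)
      _ = 1565/θ^2 * (R * δ⁻¹) := by field_simp; ring
      _ ≤ 1565/θ^2 * ((19/θ) ^ (4/θ) * δ ^ (-(5/θ))) :=
          mul_le_mul_of_nonneg_left hRδ (by positivity)
      _ = 1565/θ^2 * (19/θ) ^ (4/θ) * δ ^ (-(5/θ)) := by ring
  calc δ * (∑ n ∈ l.support, |(l n : ℝ)| * wR n ^ (θ/2))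
        + ∑ n ∈ l.support, (if |n| ≤ (M:ℤ) then c else 0)
      ≤ δ * (∑ n ∈ l.support, |(l n : ℝ)| * wR n ^ (θ/2))
        + 1565/θ^2 * (19/θ) ^ (4/θ) * δ ^ (-(5/θ)) := by linarith
    _ = 1565/θ^2 * (19/θ) ^ (4/θ) * δ ^ (-(5/θ))
        + δ * ∑ n ∈ l.support, |(l n : ℝ)| * wR n ^ (θ/2) := by ring
end

section
/- For every θ ∈ (0,1) there exists a constant C > 0, depending only on θ, with the following property. Let γ > 0 and let ω : ℤ → ℝ be γ-Diophantine, i.e. for every nonzero finitely supported l : ℤ → ℤ one has dist(∑_n l_n·ω_n, ℤ) ≥ γ·∏_{n∈ℤ} (1 + l_n²·w(n)⁴)^{−1}. Then for every real B ≥ 2 and every nonzero finitely supported l : ℤ → ℤ with ∑_{n∈ℤ} |l_n|·w(n)^{θ/2} ≤ B, one has dist(∑_n l_n·ω_n, ℤ) ≥ γ·exp( −C·B^{3/(3+θ)} ). -/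
open scoped BigOperators

/-- Distance from a real number to the nearest integer. -/
noncomputable def distZ (x : ℝ) : ℝ := |x - round x|

lemma one_le_wR (n : ℤ) : (1:ℝ) ≤ wR n := le_max_left _ _

lemma card_le_aux (S : Finset ℤ) (θ B : ℝ) (hθ0 : 0 < θ) (hB : 1 ≤ B)
    (h : ∑ n ∈ S, (wR n) ^ (θ/2) ≤ B) :
    (S.card : ℝ) ≤ 4 * B ^ (2/(2+θ)) := by
  have h2θ : (0:ℝ) < 2 + θ := by linarith
  have hB0 : (0:ℝ) < B := by linarith
  have hBpow1 : (1:ℝ) ≤ B ^ (2/(2+θ)) := Real.one_le_rpow hB (by positivity)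
  set m := S.card with hm
  by_cases hm4 : m ≤ 4
  · calc (m:ℝ) ≤ 4 := by exact_mod_cast hm4
    _ ≤ 4 * B ^ (2/(2+θ)) := by linarith
  push_neg at hm4
  set k : ℕ := m / 4 with hk
  set S₂ := S.filter (fun n => (k:ℤ) < |n|) with hS₂
  -- card bound on complement
  have hcompl : (S.filter (fun n => ¬ (k:ℤ) < |n|)).card ≤ 2*k+1 := by
    have hsub : S.filter (fun n => ¬ (k:ℤ) < |n|) ⊆ Finset.Icc (-(k:ℤ)) k := by
      intro n hn
      simp only [Finset.mem_filter, not_lt] at hn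
      rw [Finset.mem_Icc]
      constructor <;> [linarith [neg_abs_le n, hn.2]; linarith [le_abs_self n, hn.2]]
    calc (S.filter (fun n => ¬ (k:ℤ) < |n|)).card ≤ (Finset.Icc (-(k:ℤ)) k).card :=
          Finset.card_le_card hsub
    _ = 2*k+1 := by rw [Int.card_Icc]; omega
  have hsplit : S₂.card + (S.filter (fun n => ¬ (k:ℤ) < |n|)).card = m :=
    Finset.card_filter_add_card_filter_not _
  have hcard2 : m ≤ S₂.card + 2*k + 1 := by omega
  -- real bound: (m:ℝ)/4 ≤ S₂.card
  have hkm : 4*k ≤ m ∧ m < 4*(k+1) := by constructor <;> omega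
  have hcard2R : (m:ℝ)/4 ≤ (S₂.card : ℝ) := by
    have h1 : m ≤ 4 * S₂.card := by omega
    have h1R : (m:ℝ) ≤ 4 * (S₂.card:ℝ) := by exact_mod_cast h1
    linarith
  -- each element of S₂ has wR ≥ m/4
  have hwS₂ : ∀ n ∈ S₂, ((m:ℝ)/4) ^ (θ/2) ≤ wR n ^ (θ/2) := by
    intro n hn
    simp only [hS₂, Finset.mem_filter] at hn
    have h1 : ((k:ℝ)+1) ≤ |(n:ℝ)| := by
      have := hn.2
      have : (k:ℤ) + 1 ≤ |n| := hn.2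
      calc ((k:ℝ)+1) = (((k:ℤ)+1 : ℤ) : ℝ) := by push_cast; ring
      _ ≤ ((|n| : ℤ) : ℝ) := by exact_mod_cast this
      _ = |(n:ℝ)| := by push_cast; ring
    have h2 : (m:ℝ)/4 ≤ wR n := by
      have hmk : (m:ℝ) < 4*((k:ℝ)+1) := by exact_mod_cast hkm.2
      have : |(n:ℝ)| ≤ wR n := le_max_right _ _
      linarith
    exact Real.rpow_le_rpow (by positivity) h2 (by positivity)
  have hsum2 : (S₂.card : ℝ) * ((m:ℝ)/4) ^ (θ/2) ≤ ∑ n ∈ S₂, wR n ^ (θ/2) := by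
    have := Finset.card_nsmul_le_sum S₂ (fun n => wR n ^ (θ/2)) (((m:ℝ)/4) ^ (θ/2)) hwS₂
    simpa [nsmul_eq_mul] using this
  have hsumsub : ∑ n ∈ S₂, wR n ^ (θ/2) ≤ ∑ n ∈ S, wR n ^ (θ/2) := by
    apply Finset.sum_le_sum_of_subset_of_nonneg (Finset.filter_subset _ _)
    intro n _ _
    exact Real.rpow_nonneg (le_trans zero_le_one (one_le_wR n)) _
  have hm4R : (4:ℝ) ≤ (m:ℝ) := by exact_mod_cast hm4.le
  have hq : (0:ℝ) < (m:ℝ)/4 := by linarith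
  have hmain : ((m:ℝ)/4) ^ ((2+θ)/2) ≤ B := by
    have : ((m:ℝ)/4) * ((m:ℝ)/4) ^ (θ/2) ≤ B := by
      calc ((m:ℝ)/4) * ((m:ℝ)/4) ^ (θ/2) ≤ (S₂.card : ℝ) * ((m:ℝ)/4) ^ (θ/2) := by
            apply mul_le_mul_of_nonneg_right hcard2R (by positivity)
      _ ≤ ∑ n ∈ S₂, wR n ^ (θ/2) := hsum2
      _ ≤ ∑ n ∈ S, wR n ^ (θ/2) := hsumsub
      _ ≤ B := h
    calc ((m:ℝ)/4) ^ ((2+θ)/2) = ((m:ℝ)/4) ^ ((1:ℝ) + θ/2) := by ring_nf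
    _ = ((m:ℝ)/4) ^ (1:ℝ) * ((m:ℝ)/4) ^ (θ/2) := Real.rpow_add hq _ _
    _ = ((m:ℝ)/4) * ((m:ℝ)/4) ^ (θ/2) := by rw [Real.rpow_one]
    _ ≤ B := this
  have hfin : (m:ℝ)/4 ≤ B ^ (2/(2+θ)) := by
    have := Real.rpow_le_rpow (by positivity) hmain (le_of_lt (show (0:ℝ) < 2/(2+θ) by positivity))
    rwa [← Real.rpow_mul (le_of_lt hq),
      show (2+θ)/2 * (2/(2+θ)) = 1 by field_simp, Real.rpow_one] at this
  linarith

theorem stmt9 (θ : ℝ) (hθ : θ ∈ Set.Ioo (0:ℝ) 1) :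
    ∃ C > (0:ℝ), ∀ γ : ℝ, 0 < γ → ∀ ω : ℤ → ℝ,
      (∀ l : ℤ →₀ ℤ, l ≠ 0 →
        γ * (∏ n ∈ l.support, (1 + (l n : ℝ) ^ 2 * wR n ^ 4))⁻¹
          ≤ distZ (∑ n ∈ l.support, (l n : ℝ) * ω n)) →
      ∀ B : ℝ, 2 ≤ B → ∀ l : ℤ →₀ ℤ, l ≠ 0 →
        (∑ n ∈ l.support, |(l n : ℝ)| * wR n ^ (θ / 2)) ≤ B →
        γ * Real.exp (-(C * B ^ (3 / (3 + θ))))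
          ≤ distZ (∑ n ∈ l.support, (l n : ℝ) * ω n) := by
  obtain ⟨hθ0, hθ1⟩ := hθ
  have h2θ : (0:ℝ) < 2 + θ := by linarith
  have h3θ : (0:ℝ) < 3 + θ := by linarith
  set δ : ℝ := θ / ((2+θ)*(3+θ)) with hδdef
  have hδ0 : 0 < δ := by positivity
  refine ⟨4*(4+8/θ)/δ, by positivity, ?_⟩
  intro γ hγ ω hω B hB l hl hsum
  have hB0 : (0:ℝ) < B := by linarith
  have hB1 : (1:ℝ) ≤ B := by linarith
  set S := l.support with hS
  set m := S.card with hm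
  -- pointwise positivity facts
  have hw1 : ∀ n, (1:ℝ) ≤ wR n := one_le_wR
  have hw0 : ∀ n, (0:ℝ) < wR n := fun n => lt_of_lt_of_le one_pos (hw1 n)
  have hwp1 : ∀ n, (1:ℝ) ≤ wR n ^ (θ/2) := fun n =>
    Real.one_le_rpow (hw1 n) (by positivity)
  have hl1 : ∀ n ∈ S, (1:ℝ) ≤ |(l n : ℝ)| := by
    intro n hn
    have : l n ≠ 0 := Finsupp.mem_support_iff.mp hn
    have : (1:ℤ) ≤ |l n| := Int.one_le_abs this
    calc (1:ℝ) ≤ ((|l n| : ℤ) : ℝ) := by exact_mod_cast this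
    _ = |(l n : ℝ)| := by push_cast; ring
  have htnn : ∀ n ∈ S, (0:ℝ) ≤ |(l n : ℝ)| * wR n ^ (θ/2) := by
    intro n hn
    have := hwp1 n; have := hl1 n hn
    nlinarith
  -- single term ≤ B facts
  have hterm : ∀ n ∈ S, |(l n : ℝ)| * wR n ^ (θ/2) ≤ B := by
    intro n hn
    exact le_trans (Finset.single_le_sum htnn hn) hsum
  have hlB : ∀ n ∈ S, |(l n : ℝ)| ≤ B := by
    intro n hn
    have h1 := hwp1 n
    have h2 := hterm n hn
    have h3 := hl1 n hn
    nlinarith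
  have hwB : ∀ n ∈ S, wR n ^ (θ/2) ≤ B := by
    intro n hn
    have h1 := hwp1 n
    have h2 := hterm n hn
    have h3 := hl1 n hn
    nlinarith
  -- counting
  have hsum' : ∑ n ∈ S, wR n ^ (θ/2) ≤ B := by
    refine le_trans (Finset.sum_le_sum ?_) hsum
    intro n hn
    have h1 := hwp1 n
    have h2 := hl1 n hn
    nlinarith
  have hcard : (m:ℝ) ≤ 4 * B ^ (2/(2+θ)) := card_le_aux S θ B hθ0 hB1 hsum'
  -- per-term product bound
  have hE : (0:ℝ) < 4 * B ^ (2 + 8/θ) := by positivity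
  have hE1 : (1:ℝ) ≤ B ^ (2 + 8/θ) := Real.one_le_rpow hB1 (by positivity)
  have hprod : ∏ n ∈ S, (1 + (l n : ℝ) ^ 2 * wR n ^ 4) ≤ (4 * B ^ (2 + 8/θ)) ^ m := by
    rw [← Finset.prod_const]
    apply Finset.prod_le_prod
    · intro n hn; positivity
    · intro n hn
      have hwle : wR n ≤ B ^ (2/θ) := by
        have := Real.rpow_le_rpow (Real.rpow_nonneg (hw0 n).le (θ/2)) (hwB n hn)
          (le_of_lt (show (0:ℝ) < 2/θ by positivity))
        rwa [← Real.rpow_mul (le_of_lt (hw0 n)),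
          show θ/2 * (2/θ) = 1 by field_simp, Real.rpow_one] at this
      have hw4 : wR n ^ 4 ≤ B ^ (8/θ) := by
        calc wR n ^ 4 ≤ (B ^ (2/θ)) ^ 4 := by
              apply pow_le_pow_left₀ (le_of_lt (hw0 n)) hwle
        _ = B ^ ((2/θ) * (4:ℕ)) := by
              rw [← Real.rpow_natCast (B ^ (2/θ)) 4, ← Real.rpow_mul (le_of_lt hB0)]
        _ = B ^ (8/θ) := by norm_num; ring_nf
      have hl2 : (l n : ℝ) ^ 2 ≤ B ^ (2:ℝ) := by
        rw [Real.rpow_two]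
        rw [← sq_abs]
        apply pow_le_pow_left₀ (abs_nonneg _) (hlB n hn)
      have hsplit : B ^ (2:ℝ) * B ^ (8/θ) = B ^ (2 + 8/θ) := by
        rw [← Real.rpow_add hB0]
      have hmul : (l n : ℝ) ^ 2 * wR n ^ 4 ≤ B ^ (2 + 8/θ) := by
        rw [← hsplit]
        apply mul_le_mul hl2 hw4 (by positivity) (by positivity)
      linarith
  -- log bounds
  have hlogB0 : 0 ≤ Real.log B := Real.log_nonneg hB1
  have hlog4 : Real.log 4 ≤ 2 * Real.log B := by
    have h4 : (4:ℝ) = 2^2 := by norm_num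
    rw [h4, Real.log_pow]
    have := Real.log_le_log (by norm_num) hB
    push_cast
    linarith
  have hlogE : Real.log (4 * B ^ (2 + 8/θ)) ≤ (4 + 8/θ) * Real.log B := by
    rw [Real.log_mul (by norm_num) (by positivity), Real.log_rpow hB0]
    linarith
  have hlogBδ : Real.log B ≤ B ^ δ / δ := by
    have h1 : Real.log (B ^ δ) ≤ B ^ δ - 1 := Real.log_le_sub_one_of_pos (by positivity)
    rw [Real.log_rpow hB0] at h1
    rw [le_div_iff₀ hδ0]
    nlinarith
  -- assemble exponent bound
  have hexp : (m:ℝ) * Real.log (4 * B ^ (2 + 8/θ)) ≤ (4*(4+8/θ)/δ) * B ^ (3/(3+θ)) := by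
    have hc1 : (m:ℝ) * Real.log (4 * B ^ (2 + 8/θ)) ≤ (m:ℝ) * ((4 + 8/θ) * Real.log B) := by
      apply mul_le_mul_of_nonneg_left hlogE (Nat.cast_nonneg m)
    have hc2 : (m:ℝ) * ((4 + 8/θ) * Real.log B)
        ≤ (4 * B ^ (2/(2+θ))) * ((4 + 8/θ) * (B ^ δ / δ)) := by
      have h48 : (0:ℝ) ≤ 4 + 8/θ := by positivity
      apply mul_le_mul hcard _ (by positivity) (by positivity)
      exact mul_le_mul_of_nonneg_left hlogBδ h48
    have hc3 : (4 * B ^ (2/(2+θ))) * ((4 + 8/θ) * (B ^ δ / δ))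
        = (4*(4+8/θ)/δ) * B ^ (3/(3+θ)) := by
      rw [show (3:ℝ)/(3+θ) = 2/(2+θ) + δ by rw [hδdef]; field_simp; ring,
        Real.rpow_add hB0]
      field_simp
    linarith
  have hprodpos : (0:ℝ) < ∏ n ∈ S, (1 + (l n : ℝ) ^ 2 * wR n ^ 4) := by
    apply Finset.prod_pos
    intro n hn; positivity
  have hprodexp : ∏ n ∈ S, (1 + (l n : ℝ) ^ 2 * wR n ^ 4)
      ≤ Real.exp ((4*(4+8/θ)/δ) * B ^ (3/(3+θ))) := by
    calc ∏ n ∈ S, (1 + (l n : ℝ) ^ 2 * wR n ^ 4) ≤ (4 * B ^ (2 + 8/θ)) ^ m := hprod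
    _ = Real.exp ((m:ℝ) * Real.log (4 * B ^ (2 + 8/θ))) := by
        rw [← Real.exp_log hE, ← Real.exp_nat_mul]
        norm_num
    _ ≤ Real.exp ((4*(4+8/θ)/δ) * B ^ (3/(3+θ))) := Real.exp_le_exp.mpr hexp
  calc γ * Real.exp (-((4*(4+8/θ)/δ) * B ^ (3/(3+θ))))
      ≤ γ * (∏ n ∈ S, (1 + (l n : ℝ) ^ 2 * wR n ^ 4))⁻¹ := by
        apply mul_le_mul_of_nonneg_left _ hγ.le
        rw [Real.exp_neg]
        exact inv_anti₀ hprodpos hprodexp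
  _ ≤ distZ (∑ n ∈ S, (l n : ℝ) * ω n) := hω l hl
end
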